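/- arXiv:2304.04206 — 8 statements merged into one kernel-verified Lean document; each statement's English description precedes it below -/
import Mathlib

section
/- Every nontrivial commutative semiring R (with 0 ≠ 1) contains a minimal k-prime ideal, i.e., the set of k-prime ideals of R, ordered by inclusion, has a minimal element. -/
variable {R : Type*} [CommSemiring R]

/-- An ideal `I` of a commutative semiring is a *k-ideal* (subtractive ideal) if
`a ∈ I` and `a + b ∈ I` imply `b ∈ I`. -/
def IsKIdeal (I : Ideal R) : Prop :=
  ∀ a b : R, a ∈ I → a + b ∈ I → b ∈ I

/-- A *k-prime* ideal: a proper k-ideal `P` such that for all k-ideals `I`, `J`,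
`I * J ≤ P` implies `I ≤ P` or `J ≤ P`. -/
def IsKPrime (P : Ideal R) : Prop :=
  IsKIdeal P ∧ P ≠ ⊤ ∧
    ∀ I J : Ideal R, IsKIdeal I → IsKIdeal J → I * J ≤ P → I ≤ P ∨ J ≤ P

/-- The k-closure of an ideal: `{x | ∃ a ∈ A, x + a ∈ A}`. -/
def kClosure (A : Ideal R) : Ideal R where
  carrier := {x | ∃ a ∈ A, x + a ∈ A}
  zero_mem' := ⟨0, A.zero_mem, by simpa using A.zero_mem⟩
  add_mem' := by
    rintro x y ⟨a, ha, hxa⟩ ⟨b, hb, hyb⟩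
    exact ⟨a + b, A.add_mem ha hb, by
      have : x + y + (a + b) = (x + a) + (y + b) := by ring
      rw [this]; exact A.add_mem hxa hyb⟩
  smul_mem' := by
    rintro r x ⟨a, ha, hxa⟩
    exact ⟨r * a, A.mul_mem_left r ha, by
      have : r • x + r * a = r * (x + a) := by simp [smul_eq_mul]; ring
      rw [this]; exact A.mul_mem_left r hxa⟩

theorem le_kClosure (A : Ideal R) : A ≤ kClosure A :=
  fun x hx => ⟨x, hx, A.add_mem hx hx⟩

theorem isKIdeal_kClosure (A : Ideal R) : IsKIdeal (kClosure A) := by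
  rintro x y ⟨a, ha, hxa⟩ ⟨b, hb, hxyb⟩
  refine ⟨b + (x + a), A.add_mem hb hxa, ?_⟩
  have : y + (b + (x + a)) = (x + y + b) + a := by ring
  rw [this]; exact A.add_mem hxyb ha

/-- A maximal proper k-ideal is k-prime. -/
theorem isKPrime_of_maximal {P : Ideal R}
    (hP : Maximal (fun I : Ideal R => IsKIdeal I ∧ I ≠ ⊤) P) : IsKPrime P := by
  obtain ⟨⟨hPk, hPne⟩, hmax⟩ := hP
  refine ⟨hPk, hPne, fun I J hI hJ hIJ => ?_⟩
  by_cases hIP : I ≤ P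
  · exact Or.inl hIP
  right
  obtain ⟨i, hiI, hiP⟩ := SetLike.not_le_iff_exists.mp hIP
  -- the k-closure of P ⊔ span {i} is a k-ideal strictly containing P, hence ⊤
  set A : Ideal R := P ⊔ Ideal.span {i} with hA
  have hcl : kClosure A = ⊤ := by
    by_contra hne
    have hle : P ≤ kClosure A := le_trans le_sup_left (le_kClosure A)
    have heq := hmax ⟨isKIdeal_kClosure A, hne⟩ hle
    exact hiP (heq (le_kClosure A (Ideal.mem_sup_right (Ideal.subset_span rfl))))
  have h1 : (1 : R) ∈ kClosure A := hcl ▸ Submodule.mem_top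
  obtain ⟨c, hc, h1c⟩ := h1
  -- c ∈ P ⊔ span{i}, 1 + c ∈ P ⊔ span{i}
  intro j hjJ
  obtain ⟨p, hp, s, hs, hcEq⟩ := Submodule.mem_sup.mp hc
  obtain ⟨r, hr⟩ := Ideal.mem_span_singleton'.mp hs
  obtain ⟨p', hp', s', hs', hcEq'⟩ := Submodule.mem_sup.mp h1c
  obtain ⟨r', hr'⟩ := Ideal.mem_span_singleton'.mp hs'
  have hij : i * j ∈ P := hIJ (Ideal.mul_mem_mul hiI hjJ)
  have hjc : j * c ∈ P := by
    rw [← hcEq, ← hr]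
    have : j * (p + r * i) = j * p + r * (i * j) := by ring
    rw [this]
    exact P.add_mem (P.mul_mem_left j hp) (P.mul_mem_left r hij)
  have hj1c : j * (1 + c) ∈ P := by
    rw [← hcEq', ← hr']
    have : j * (p' + r' * i) = j * p' + r' * (i * j) := by ring
    rw [this]
    exact P.add_mem (P.mul_mem_left j hp') (P.mul_mem_left r' hij)
  have : j * c + j ∈ P := by
    have h : j * c + j = j * (1 + c) := by ring
    rw [h]; exact hj1c
  exact hPk (j * c) j hjc this

theorem exists_kPrime (R : Type*) [CommSemiring R] [Nontrivial R] :
    ∃ P : Ideal R, IsKPrime P := by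
  have h := zorn_le_nonempty₀ {I : Ideal R | IsKIdeal I ∧ I ≠ ⊤}
    (fun c hcs hc y hy => ?_) ⊥ ⟨fun a b ha hab => by
      rw [Submodule.mem_bot] at ha hab ⊢
      subst ha; simpa using hab,
      by simp [Ideal.ne_top_iff_one]⟩
  · obtain ⟨m, _, hm⟩ := h
    exact ⟨m, isKPrime_of_maximal hm⟩
  · -- upper bound for a nonempty chain of proper k-ideals
    refine ⟨sSup c, ⟨?_, ?_⟩, fun z hz => le_sSup hz⟩
    · intro a b ha hab
      have hdir : DirectedOn (· ≤ ·) c := hc.directedOn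
      obtain ⟨I, hIc, haI⟩ := (Submodule.mem_sSup_of_directed ⟨y, hy⟩ hdir).mp ha
      obtain ⟨J, hJc, habJ⟩ := (Submodule.mem_sSup_of_directed ⟨y, hy⟩ hdir).mp hab
      obtain ⟨K, hKc, hIK, hJK⟩ := hdir I hIc J hJc
      exact le_sSup hKc ((hcs hKc).1 a b (hIK haI) (hJK habJ))
    · rw [Ideal.ne_top_iff_one]
      intro h1
      have hdir : DirectedOn (· ≤ ·) c := hc.directedOn
      obtain ⟨I, hIc, h1I⟩ := (Submodule.mem_sSup_of_directed ⟨y, hy⟩ hdir).mp h1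
      exact (hcs hIc).2 ((Ideal.eq_top_iff_one I).mpr h1I)

/-- Every nontrivial commutative semiring contains a minimal k-prime ideal. -/
theorem exists_minimal_kPrime (R : Type*) [CommSemiring R] [Nontrivial R] :
    ∃ P : Ideal R, IsKPrime P ∧ ∀ Q : Ideal R, IsKPrime Q → Q ≤ P → Q = P := by
  obtain ⟨P₀, hP₀⟩ := exists_kPrime R
  have h := @zorn_le_nonempty₀ (Ideal R)ᵒᵈ _ {P : (Ideal R)ᵒᵈ | IsKPrime (OrderDual.ofDual P)}
    (fun c hcs hc y hy => ?_) (OrderDual.toDual P₀) hP₀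
  · obtain ⟨m, _, hmem, hm⟩ := h
    refine ⟨OrderDual.ofDual m, hmem, fun Q hQ hQm => ?_⟩
    exact le_antisymm hQm (hm hQ hQm)
  · -- lower bound (in Ideal R) for a nonempty chain of k-prime ideals: sInf
    have hall : ∀ p ∈ c, IsKPrime (OrderDual.ofDual p) := fun p hp => hcs hp
    refine ⟨OrderDual.toDual (sInf (OrderDual.ofDual '' c)), ⟨?_, ?_, ?_⟩,
      fun z hz => show sInf (OrderDual.ofDual '' c) ≤ OrderDual.ofDual z from
        sInf_le (Set.mem_image_of_mem _ hz)⟩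
    · intro a b ha hab
      simp only [OrderDual.ofDual_toDual, Submodule.mem_sInf] at ha hab ⊢
      rintro p ⟨q, hq, rfl⟩
      exact (hall q hq).1 a b (ha _ ⟨q, hq, rfl⟩) (hab _ ⟨q, hq, rfl⟩)
    · intro htop
      rw [OrderDual.ofDual_toDual] at htop
      have hle : sInf (OrderDual.ofDual '' c) ≤ OrderDual.ofDual y :=
        sInf_le ⟨y, hy, rfl⟩
      rw [htop, top_le_iff] at hle
      exact (hall y hy).2.1 hle
    · intro I J hI hJ hIJ
      rw [OrderDual.ofDual_toDual] at hIJ ⊢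
      by_contra hcon
      push_neg at hcon
      obtain ⟨hInle, hJnle⟩ := hcon
      have h1 : ∃ P ∈ c, ¬ I ≤ OrderDual.ofDual P := by
        by_contra h; push_neg at h
        exact hInle (le_sInf (by rintro p ⟨q, hq, rfl⟩; exact h q hq))
      have h2 : ∃ P ∈ c, ¬ J ≤ OrderDual.ofDual P := by
        by_contra h; push_neg at h
        exact hJnle (le_sInf (by rintro p ⟨q, hq, rfl⟩; exact h q hq))
      obtain ⟨P1, hP1c, hP1⟩ := h1
      obtain ⟨P2, hP2c, hP2⟩ := h2
      have hIJ1 : I * J ≤ OrderDual.ofDual P1 :=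
        le_trans hIJ (sInf_le ⟨P1, hP1c, rfl⟩)
      have hIJ2 : I * J ≤ OrderDual.ofDual P2 :=
        le_trans hIJ (sInf_le ⟨P2, hP2c, rfl⟩)
      rcases hc.total hP1c hP2c with h12 | h21
      · -- in dual: P1 ≤ P2 means P2 ≤ P1 as ideals
        have hsub : (OrderDual.ofDual P2 : Ideal R) ≤ OrderDual.ofDual P1 := h12
        rcases (hall P2 hP2c).2.2 I J hI hJ hIJ2 with h | h
        · exact hP1 (le_trans h hsub)
        · exact hP2 h
      · have hsub : (OrderDual.ofDual P1 : Ideal R) ≤ OrderDual.ofDual P2 := h21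
        rcases (hall P1 hP1c).2.2 I J hI hJ hIJ1 with h | h
        · exact hP1 h
        · exact hP2 (le_trans h hsub)
end

section
/- For a proper k-ideal P of a commutative semiring R, the following are equivalent: (1) for all x, y ∈ R, xy ∈ P implies x ∈ P or y ∈ P; (2) for all k-ideals I, J of R, IJ ⊆ P implies I ⊆ P or J ⊆ P. -/
variable {R : Type*} [CommSemiring R]

/-- The k-closure of an ideal. -/
def kcl (I : Ideal R) : Ideal R where
  carrier := {a | ∃ b ∈ I, a + b ∈ I}
  zero_mem' := ⟨0, I.zero_mem, by simpa using I.zero_mem⟩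
  add_mem' := by
    rintro a c ⟨b1, hb1, hab1⟩ ⟨b2, hb2, hcb2⟩
    exact ⟨b1 + b2, I.add_mem hb1 hb2, by
      have : a + c + (b1 + b2) = (a + b1) + (c + b2) := by ring
      rw [this]; exact I.add_mem hab1 hcb2⟩
  smul_mem' := by
    rintro r a ⟨b, hb, hab⟩
    exact ⟨r * b, I.mul_mem_left r hb, by
      have : r • a + r * b = r * (a + b) := by simp [smul_eq_mul]; ring
      rw [this]; exact I.mul_mem_left r hab⟩

lemma kcl_isK (I : Ideal R) : IsKIdeal (kcl I) := by
  rintro a b ⟨c, hc, hac⟩ ⟨d, hd, habd⟩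
  refine ⟨a + c + d, I.add_mem hac hd, ?_⟩
  have : b + (a + c + d) = (a + b + d) + c := by ring
  rw [this]; exact I.add_mem habd hc

lemma mem_kcl_self (I : Ideal R) {x : R} (hx : x ∈ I) : x ∈ kcl I :=
  ⟨0, I.zero_mem, by simpa using hx⟩

/-- For a proper k-ideal `P`, the elementwise primeness condition is equivalent to
the idealwise primeness condition for k-ideals. -/
theorem kPrime_elementwise_iff (P : Ideal R) (hP : IsKIdeal P) (hproper : P ≠ ⊤) :
    (∀ x y : R, x * y ∈ P → x ∈ P ∨ y ∈ P) ↔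
      (∀ I J : Ideal R, IsKIdeal I → IsKIdeal J → I * J ≤ P → I ≤ P ∨ J ≤ P) := by
  constructor
  · intro hE I J _ _ hIJ
    by_contra h
    push_neg at h
    obtain ⟨x, hxI, hxP⟩ := Set.not_subset.mp h.1
    obtain ⟨y, hyJ, hyP⟩ := Set.not_subset.mp h.2
    rcases hE x y (hIJ (Ideal.mul_mem_mul hxI hyJ)) with h1 | h1
    · exact hxP h1
    · exact hyP h1
  · intro hI x y hxy
    have key : kcl (Ideal.span {x}) * kcl (Ideal.span {y}) ≤ P := by
      rw [Ideal.mul_le]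
      rintro a ⟨b1, hb1, hab1⟩ c ⟨b2, hb2, hcb2⟩
      rw [Ideal.mem_span_singleton'] at hb1 hab1 hb2 hcb2
      obtain ⟨s, hs⟩ := hb1
      obtain ⟨r, hr⟩ := hab1
      obtain ⟨u, hu⟩ := hb2
      obtain ⟨t, ht⟩ := hcb2
      -- step: ∀ v, a * (v * y) ∈ P
      have step : ∀ v : R, a * (v * y) ∈ P := by
        intro v
        have h1 : s * v * (x * y) + a * (v * y) ∈ P := by
          have : s * v * (x * y) + a * (v * y) = (a + b1) * (v * y) := by
            rw [← hs]; ring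
          rw [this, ← hr]
          have : r * x * (v * y) = (r * v) * (x * y) := by ring
          rw [this]
          exact P.mul_mem_left _ hxy
        exact hP _ _ (P.mul_mem_left _ hxy) h1
      have h2 : a * c + a * (u * y) ∈ P := by
        have : a * c + a * (u * y) = a * (c + b2) := by rw [← hu]; ring
        rw [this, ← ht]
        have : a * (t * y) = a * (t * y) := rfl
        exact step t
      exact hP _ _ (step u) (by rwa [add_comm] at h2)
    rcases hI _ _ (kcl_isK _) (kcl_isK _) key with h | h
    · exact Or.inl (h (mem_kcl_self _ (Ideal.mem_span_singleton_self x)))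
    · exact Or.inr (h (mem_kcl_self _ (Ideal.mem_span_singleton_self y)))
end

section
/- For k-ideals I and J of a commutative semiring R, the intersection of all k-prime ideals containing the ideal product IJ equals the intersection of all k-prime ideals containing I ∩ J, and both equal R_k(I) ∩ R_k(J). -/
variable {R : Type*} [CommSemiring R]

/-- The *k-radical* of an ideal: the intersection of all k-prime ideals containing it. -/
def kRadical (I : Ideal R) : Ideal R :=
  sInf {P : Ideal R | IsKPrime P ∧ I ≤ P}

lemma kprime_sets_eq (I J : Ideal R) (hI : IsKIdeal I) (hJ : IsKIdeal J) :
    {P : Ideal R | IsKPrime P ∧ I * J ≤ P} =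
      {P : Ideal R | IsKPrime P ∧ I ≤ P} ∪ {P : Ideal R | IsKPrime P ∧ J ≤ P} := by
  ext P
  simp only [Set.mem_setOf_eq, Set.mem_union]
  constructor
  · rintro ⟨hP, hle⟩
    rcases hP.2.2 I J hI hJ hle with h | h
    · exact Or.inl ⟨hP, h⟩
    · exact Or.inr ⟨hP, h⟩
  · rintro (⟨hP, h⟩ | ⟨hP, h⟩)
    · exact ⟨hP, le_trans Ideal.mul_le_inf (le_trans inf_le_left h)⟩
    · exact ⟨hP, le_trans Ideal.mul_le_inf (le_trans inf_le_right h)⟩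

lemma kprime_sets_eq' (I J : Ideal R) (hI : IsKIdeal I) (hJ : IsKIdeal J) :
    {P : Ideal R | IsKPrime P ∧ I * J ≤ P} =
      {P : Ideal R | IsKPrime P ∧ I ⊓ J ≤ P} := by
  ext P
  simp only [Set.mem_setOf_eq]
  constructor
  · rintro ⟨hP, hle⟩
    refine ⟨hP, ?_⟩
    rcases hP.2.2 I J hI hJ hle with h | h
    · exact le_trans inf_le_left h
    · exact le_trans inf_le_right h
  · rintro ⟨hP, hle⟩
    exact ⟨hP, le_trans Ideal.mul_le_inf hle⟩

/-- For k-ideals `I`, `J`: the intersection of all k-prime ideals containing `I * J`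
equals the intersection of all k-prime ideals containing `I ⊓ J`, and both equal
`kRadical I ⊓ kRadical J`. -/
theorem kRadical_mul_inf (I J : Ideal R) (hI : IsKIdeal I) (hJ : IsKIdeal J) :
    sInf {P : Ideal R | IsKPrime P ∧ I * J ≤ P} =
        sInf {P : Ideal R | IsKPrime P ∧ I ⊓ J ≤ P} ∧
      sInf {P : Ideal R | IsKPrime P ∧ I * J ≤ P} = kRadical I ⊓ kRadical J := by
  refine ⟨by rw [kprime_sets_eq' I J hI hJ], ?_⟩
  rw [kprime_sets_eq I J hI hJ, sInf_union]
  rfl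
end

section
/- A proper k-ideal P of a commutative semiring R is k-prime if and only if the complement R ∖ P is a multiplicatively closed subset of R. -/
variable {R : Type*} [CommSemiring R]

/-- The k-closure of an ideal. -/
def kclosure (I : Ideal R) : Ideal R where
  carrier := {x | ∃ v ∈ I, v + x ∈ I}
  zero_mem' := ⟨0, I.zero_mem, by simpa using I.zero_mem⟩
  add_mem' := by
    rintro x y ⟨v, hv, hvx⟩ ⟨w, hw, hwy⟩
    exact ⟨v + w, I.add_mem hv hw, by
      have : (v + x) + (w + y) ∈ I := I.add_mem hvx hwy
      convert this using 1; ring⟩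
  smul_mem' := by
    rintro r x ⟨v, hv, hvx⟩
    exact ⟨r * v, I.mul_mem_left r hv, by
      have : r * (v + x) ∈ I := I.mul_mem_left r hvx
      simpa [mul_add] using this⟩

lemma mem_kclosure_self (I : Ideal R) {x : R} (hx : x ∈ I) : x ∈ kclosure I :=
  ⟨0, I.zero_mem, by simpa using hx⟩

lemma kclosure_isKIdeal (I : Ideal R) : IsKIdeal (kclosure I) := by
  rintro a b ⟨v, hv, hva⟩ ⟨w, hw, hwab⟩
  refine ⟨v + w + a, by simpa [add_right_comm] using I.add_mem hva hw, ?_⟩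
  have : v + (w + (a + b)) ∈ I := I.add_mem hv hwab
  convert this using 1; ring

/-- A proper k-ideal `P` is k-prime if and only if its complement is a
multiplicatively closed subset of `R`. -/
theorem isKPrime_iff_compl_mulClosed (P : Ideal R) (hP : IsKIdeal P) (hproper : P ≠ ⊤) :
    IsKPrime P ↔
      ∀ a ∈ (P : Set R)ᶜ, ∀ b ∈ (P : Set R)ᶜ, a * b ∈ (P : Set R)ᶜ := by
  constructor
  · rintro ⟨-, -, hprime⟩ a ha b hb hab
    simp only [Set.mem_compl_iff, SetLike.mem_coe] at ha hb hab
    have key : kclosure (Ideal.span {a}) * kclosure (Ideal.span {b}) ≤ P := by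
      rw [Ideal.mul_le]
      rintro x ⟨v, hv, hvx⟩ y ⟨w, hw, hwy⟩
      rw [Ideal.mem_span_singleton'] at hv hvx hw hwy
      obtain ⟨r, hr⟩ := hv; obtain ⟨s, hs⟩ := hvx
      obtain ⟨t, ht⟩ := hw; obtain ⟨u, hu⟩ := hwy
      -- first : a * y ∈ P
      have hay : a * y ∈ P := by
        refine hP (a * w) (a * y) ?_ ?_
        · rw [← ht]; have : t * (a * b) ∈ P := P.mul_mem_left t hab
          convert this using 1; ring
        · rw [← mul_add, ← hu]
          have : u * (a * b) ∈ P := P.mul_mem_left u hab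
          convert this using 1; ring
      have hvy : v * y ∈ P := by
        rw [← hr]; have := P.mul_mem_left r hay
        convert this using 1; ring
      refine hP (v * y) (x * y) hvy ?_
      have : (v + x) * y ∈ P := by
        rw [← hs, ← hr] at *
        rw [← hs]
        have := P.mul_mem_left s hay
        convert this using 1; ring
      convert this using 1; ring
    rcases hprime _ _ (kclosure_isKIdeal _) (kclosure_isKIdeal _) key with h | h
    · exact ha (h (mem_kclosure_self _ (Ideal.mem_span_singleton_self a)))
    · exact hb (h (mem_kclosure_self _ (Ideal.mem_span_singleton_self b)))
  · intro hmul
    refine ⟨hP, hproper, fun I J _ _ hIJ => ?_⟩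
    by_contra h
    push_neg at h
    obtain ⟨hI, hJ⟩ := h
    obtain ⟨x, hxI, hxP⟩ := SetLike.not_le_iff_exists.mp hI
    obtain ⟨y, hyI, hyP⟩ := SetLike.not_le_iff_exists.mp hJ
    exact hmul x hxP y hyP (hIJ (Ideal.mul_mem_mul hxI hyI))
end

section
/- For a k-ideal I of a commutative semiring R, the k-radical R_k(I) equals the set T = {r ∈ R : every multiplicatively closed subset of R containing r has nonempty intersection with I}. -/
variable {R : Type*} [CommSemiring R]

/-- The k-closure of an ideal. -/
def kCl (J : Ideal R) : Ideal R where
  carrier := {x | ∃ j ∈ J, x + j ∈ J}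
  zero_mem' := ⟨0, J.zero_mem, by simpa using J.zero_mem⟩
  add_mem' := by
    rintro x y ⟨j, hj, hxj⟩ ⟨k, hk, hyk⟩
    exact ⟨j + k, J.add_mem hj hk, by
      rw [show x + y + (j + k) = (x + j) + (y + k) by ring]; exact J.add_mem hxj hyk⟩
  smul_mem' := by
    rintro c x ⟨j, hj, hxj⟩
    exact ⟨c * j, J.mul_mem_left c hj, by
      rw [smul_eq_mul, show c * x + c * j = c * (x + j) by ring]
      exact J.mul_mem_left c hxj⟩

lemma le_kCl (J : Ideal R) : J ≤ kCl J := fun x hx => ⟨x, hx, J.add_mem hx hx⟩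

lemma kCl_isK (J : Ideal R) : IsKIdeal (kCl J) := by
  rintro a b ⟨j, hj, haj⟩ ⟨k, hk, habk⟩
  refine ⟨a + j + k, J.add_mem haj hk, ?_⟩
  rw [show b + (a + j + k) = (a + b + k) + j by ring]
  exact J.add_mem habk hj

lemma kCl_le {J P : Ideal R} (hP : IsKIdeal P) (h : J ≤ P) : kCl J ≤ P := by
  rintro x ⟨j, hj, hxj⟩
  exact hP j x (h hj) (by rw [add_comm]; exact h hxj)

lemma kCl_mul (J K : Ideal R) : kCl J * kCl K ≤ kCl (J * K) := by
  rw [Ideal.mul_le]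
  rintro u ⟨j, hj, huj⟩ v ⟨k, hk, hvk⟩
  have h1 : j * v ∈ kCl (J * K) :=
    ⟨j * k, Ideal.mul_mem_mul hj hk, by
      rw [show j * v + j * k = j * (v + k) by ring]; exact Ideal.mul_mem_mul hj hvk⟩
  have h3 : j * v + (u + j) * k ∈ kCl (J * K) :=
    (kCl _).add_mem h1 (le_kCl _ (Ideal.mul_mem_mul huj hk))
  have h4 : (j * v + (u + j) * k) + u * v ∈ kCl (J * K) := by
    rw [show (j * v + (u + j) * k) + u * v = (u + j) * (v + k) by ring]
    exact le_kCl _ (Ideal.mul_mem_mul huj hvk)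
  exact kCl_isK _ _ _ h3 h4

lemma kPrime_mem_or_mem {P : Ideal R} (hP : IsKPrime P) {x y : R}
    (h : x * y ∈ P) : x ∈ P ∨ y ∈ P := by
  have hcl : kCl (Ideal.span {x}) * kCl (Ideal.span {y}) ≤ P := by
    refine le_trans (kCl_mul _ _) (kCl_le hP.1 ?_)
    rw [Ideal.span_singleton_mul_span_singleton]
    exact Ideal.span_le.2 (Set.singleton_subset_iff.2 h)
  rcases hP.2.2 _ _ (kCl_isK _) (kCl_isK _) hcl with h' | h'
  · exact Or.inl (h' (le_kCl _ (Ideal.mem_span_singleton_self x)))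
  · exact Or.inr (h' (le_kCl _ (Ideal.mem_span_singleton_self y)))

lemma kPrime_pow_mem {P : Ideal R} (hP : IsKPrime P) {x : R} :
    ∀ n : ℕ, x ^ (n + 1) ∈ P → x ∈ P := by
  intro n
  induction n with
  | zero => simpa using id
  | succ n ih =>
    intro h
    rw [pow_succ] at h
    rcases kPrime_mem_or_mem hP h with h' | h'
    · exact ih h'
    · exact h'

/-- The k-radical of a k-ideal `I` equals the set of all `r` such that every
multiplicatively closed subset of `R` containing `r` meets `I`. -/
theorem kRadical_eq_T (I : Ideal R) (hI : IsKIdeal I) :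
    (kRadical I : Set R) =
      {r : R | ∀ S : Set R, (∀ a ∈ S, ∀ b ∈ S, a * b ∈ S) → r ∈ S →
        (S ∩ (I : Set R)).Nonempty} := by
  ext r
  simp only [SetLike.mem_coe, Set.mem_setOf_eq]
  constructor
  · -- hard direction
    intro hr S hS hrS
    by_contra hne
    rw [Set.not_nonempty_iff_eq_empty] at hne
    have hdisj : ∀ s ∈ S, s ∉ I := fun s hs hsI =>
      Set.eq_empty_iff_forall_notMem.1 hne s ⟨hs, hsI⟩
    -- Zorn's lemma on k-ideals containing I and disjoint from S
    set F : Set (Ideal R) := {J | IsKIdeal J ∧ I ≤ J ∧ ∀ s ∈ S, s ∉ J} with hF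
    have hbdd : ∀ c ⊆ F, IsChain (· ≤ ·) c → ∀ y ∈ c, ∃ ub ∈ F, ∀ z ∈ c, z ≤ ub := by
      intro c hcF hc y hyc
      refine ⟨sSup c, ⟨?_, ?_, ?_⟩, fun z hz => le_sSup hz⟩
      · intro a b ha hab
        rw [Submodule.mem_sSup_of_directed ⟨y, hyc⟩ hc.directedOn] at ha hab ⊢
        obtain ⟨J₁, hJ₁, ha⟩ := ha
        obtain ⟨J₂, hJ₂, hab⟩ := hab
        rcases hc.total hJ₁ hJ₂ with h | h
        · exact ⟨J₂, hJ₂, (hcF hJ₂).1 a b (h ha) hab⟩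
        · exact ⟨J₁, hJ₁, (hcF hJ₁).1 a b ha (h hab)⟩
      · exact le_trans (hcF hyc).2.1 (le_sSup hyc)
      · intro s hs hsup
        rw [Submodule.mem_sSup_of_directed ⟨y, hyc⟩ hc.directedOn] at hsup
        obtain ⟨J, hJ, hsJ⟩ := hsup
        exact (hcF hJ).2.2 s hs hsJ
    obtain ⟨P, hIP, hPmax⟩ := zorn_le_nonempty₀ F hbdd I ⟨hI, le_rfl, hdisj⟩
    obtain ⟨hPk, -, hPS⟩ := hPmax.1
    have hPmax : ∀ J ∈ F, P ≤ J → J ≤ P := fun J hJ hPJ => hPmax.2 hJ hPJ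
    -- P is k-prime
    have hPprime : IsKPrime P := by
      refine ⟨hPk, ?_, ?_⟩
      · intro h
        exact hPS r hrS (h ▸ Submodule.mem_top)
      · intro A B hA hB hAB
        by_contra hcon
        push_neg at hcon
        obtain ⟨hAP, hBP⟩ := hcon
        have key : ∀ C : Ideal R, ¬ C ≤ P → ∃ s ∈ S, s ∈ kCl (P ⊔ C) := by
          intro C hCP
          by_contra h
          push_neg at h
          have hmem : kCl (P ⊔ C) ∈ F :=
            ⟨kCl_isK _, le_trans hIP (le_trans le_sup_left (le_kCl _)), h⟩
          have := hPmax _ hmem (le_trans le_sup_left (le_kCl _))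
          exact hCP (le_trans (le_trans le_sup_right (le_kCl _)) this)
        obtain ⟨s₁, hs₁S, hs₁⟩ := key A hAP
        obtain ⟨s₂, hs₂S, hs₂⟩ := key B hBP
        have hsub : (P ⊔ A) * (P ⊔ B) ≤ P := by
          rw [Ideal.sup_mul, Ideal.mul_sup, Ideal.mul_sup]
          exact sup_le (sup_le Ideal.mul_le_right Ideal.mul_le_left)
            (sup_le Ideal.mul_le_right hAB)
        have : s₁ * s₂ ∈ P := by
          have h1 : s₁ * s₂ ∈ kCl ((P ⊔ A) * (P ⊔ B)) :=
            kCl_mul _ _ (Ideal.mul_mem_mul hs₁ hs₂)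
          exact kCl_le hPk hsub h1
        exact hPS _ (hS s₁ hs₁S s₂ hs₂S) this
    have : r ∈ P := Ideal.mem_sInf.1 hr ⟨hPprime, hIP⟩
    exact hPS r hrS this
  · intro hr
    rw [kRadical]
    refine Ideal.mem_sInf.2 ?_
    rintro P ⟨hP, hIP⟩
    obtain ⟨x, hxS, hxI⟩ := hr {x | ∃ n : ℕ, r ^ (n + 1) = x}
      (by rintro a ⟨m, rfl⟩ b ⟨n, rfl⟩; exact ⟨m + n + 1, by ring⟩) ⟨0, pow_one r⟩
    obtain ⟨n, rfl⟩ := hxS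
    exact kPrime_pow_mem hP n (hIP hxI)
end

section
/- If I is a proper k-ideal of a commutative semiring R, then I equals the intersection of all k-irreducible ideals of R that contain I. -/
variable {R : Type*} [CommSemiring R]

/-- A *k-irreducible* ideal: a k-ideal `I` such that for all k-ideals `J`, `K`,
`J ⊓ K = I` implies `J = I` or `K = I`. -/
def IsKIrreducible (I : Ideal R) : Prop :=
  IsKIdeal I ∧ ∀ J K : Ideal R, IsKIdeal J → IsKIdeal K → J ⊓ K = I → J = I ∨ K = I

/-- Every proper k-ideal is the intersection of all k-irreducible ideals containing it. -/
theorem kIdeal_eq_sInf_kIrreducible (I : Ideal R) (hI : IsKIdeal I) (hproper : I ≠ ⊤) :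
    I = sInf {J : Ideal R | IsKIrreducible J ∧ I ≤ J} := by
  apply le_antisymm (le_sInf fun J hJ => hJ.2)
  intro a ha
  by_contra haI
  set S : Set (Ideal R) := {J | IsKIdeal J ∧ I ≤ J ∧ a ∉ J} with hS
  have hchains : ∀ c ⊆ S, IsChain (· ≤ ·) c → ∀ y ∈ c, ∃ ub ∈ S, ∀ z ∈ c, z ≤ ub := by
    intro c hcS hchain y hy
    refine ⟨sSup c, ⟨?_, ?_, ?_⟩, fun z hz => le_sSup hz⟩
    · intro b b' hb hbb'
      have hdir : DirectedOn (· ≤ ·) c := hchain.directedOn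
      obtain ⟨J1, hJ1, hb1⟩ := (Submodule.mem_sSup_of_directed ⟨y, hy⟩ hdir).mp hb
      obtain ⟨J2, hJ2, hb2⟩ := (Submodule.mem_sSup_of_directed ⟨y, hy⟩ hdir).mp hbb'
      obtain ⟨J3, hJ3, h13, h23⟩ := hdir J1 hJ1 J2 hJ2
      exact le_sSup hJ3 ((hcS hJ3).1 b b' (h13 hb1) (h23 hb2))
    · exact (hcS hy).2.1.trans (le_sSup hy)
    · intro haT
      obtain ⟨J, hJ, haJ⟩ := (Submodule.mem_sSup_of_directed ⟨y, hy⟩ hchain.directedOn).mp haT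
      exact (hcS hJ).2.2 haJ
  obtain ⟨M, hIM, hMS, hmax⟩ := zorn_le_nonempty₀ S hchains I ⟨hI, le_rfl, haI⟩
  -- show M is k-irreducible
  have hirr : IsKIrreducible M := by
    refine ⟨hMS.1, fun J K hJ hK hJK => ?_⟩
    by_contra hne
    push_neg at hne
    have hMJ : M ≤ J := hJK ▸ inf_le_left
    have hMK : M ≤ K := hJK ▸ inf_le_right
    have haJ : a ∈ J := by
      by_contra haJ
      exact hne.1 (le_antisymm (hmax ⟨hJ, hMS.2.1.trans hMJ, haJ⟩ hMJ) hMJ)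
    have haK : a ∈ K := by
      by_contra haK
      exact hne.2 (le_antisymm (hmax ⟨hK, hMS.2.1.trans hMK, haK⟩ hMK) hMK)
    exact hMS.2.2 (hJK ▸ (Submodule.mem_inf.mpr ⟨haJ, haK⟩))
  exact hMS.2.2 (Submodule.mem_sInf.mp ha M ⟨hirr, hMS.2.1⟩)
end

section
/- If R is a weakly Noetherian commutative semiring, then every k-ideal of R can be represented as an intersection of finitely many k-irreducible k-ideals of R. -/
variable {R : Type*} [CommSemiring R]

/-- A commutative semiring is *weakly Noetherian* if every ascending chain of
k-ideals stabilizes. -/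
def WeaklyNoetherian (R : Type*) [CommSemiring R] : Prop :=
  ∀ f : ℕ → Ideal R, (∀ n, IsKIdeal (f n)) → Monotone f →
    ∃ N : ℕ, ∀ n : ℕ, N ≤ n → f n = f N

/-- In a weakly Noetherian commutative semiring, every k-ideal is a finite
intersection of k-irreducible k-ideals. -/
theorem kIdeal_eq_finite_inf_kIrreducible (R : Type*) [CommSemiring R]
    (h : WeaklyNoetherian R) (I : Ideal R) (hI : IsKIdeal I) :
    ∃ s : Finset (Ideal R), s.Nonempty ∧ (∀ J ∈ s, IsKIrreducible J) ∧
      I = s.inf id := by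
  -- From the ACC hypothesis, every nonempty set of k-ideals has a maximal element.
  have hmax : ∀ S : Set (Ideal R), (∀ J ∈ S, IsKIdeal J) → S.Nonempty →
      ∃ M ∈ S, ∀ J ∈ S, ¬ M < J := by
    intro S hSk ⟨I0, hI0⟩
    by_contra hc
    push_neg at hc
    choose g hgS hglt using hc
    let f : ℕ → {J // J ∈ S} := fun n => Nat.rec ⟨I0, hI0⟩
      (fun _ p => ⟨g p.1 p.2, hgS p.1 p.2⟩) n
    have hstep : ∀ n, (f n).1 < (f (n+1)).1 := fun n => hglt _ (f n).2
    have hmono : Monotone (fun n => (f n).1) := monotone_nat_of_le_succ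
      (fun n => (hstep n).le)
    obtain ⟨N, hN⟩ := h (fun n => (f n).1) (fun n => hSk _ (f n).2) hmono
    exact absurd (hN (N+1) (Nat.le_succ N)) (hstep N).ne'
  by_contra hbad
  set S : Set (Ideal R) := {J | IsKIdeal J ∧ ¬ ∃ s : Finset (Ideal R),
    s.Nonempty ∧ (∀ K ∈ s, IsKIrreducible K) ∧ J = s.inf id} with hS
  obtain ⟨M, ⟨hMk, hMbad⟩, hMmax⟩ := hmax S (fun J hJ => hJ.1) ⟨I, hI, hbad⟩
  apply hMbad
  by_cases hirr : IsKIrreducible M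
  · exact ⟨{M}, Finset.singleton_nonempty M,
      fun K hK => (Finset.mem_singleton.mp hK) ▸ hirr,
      by simp⟩
  · have : ¬ ∀ J K : Ideal R, IsKIdeal J → IsKIdeal K → J ⊓ K = M → J = M ∨ K = M := by
      intro hforall; exact hirr ⟨hMk, hforall⟩
    push_neg at this
    obtain ⟨J, K, hJk, hKk, hJK, hJne, hKne⟩ := this
    have hMJ : M < J := lt_of_le_of_ne (hJK ▸ inf_le_left) (Ne.symm hJne)
    have hMK : M < K := lt_of_le_of_ne (hJK ▸ inf_le_right) (Ne.symm hKne)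
    have hJgood : ∃ s : Finset (Ideal R), s.Nonempty ∧
        (∀ L ∈ s, IsKIrreducible L) ∧ J = s.inf id := by
      by_contra hc
      exact hMmax J ⟨hJk, hc⟩ hMJ
    have hKgood : ∃ s : Finset (Ideal R), s.Nonempty ∧
        (∀ L ∈ s, IsKIrreducible L) ∧ K = s.inf id := by
      by_contra hc
      exact hMmax K ⟨hKk, hc⟩ hMK
    obtain ⟨s, hsne, hsirr, hsJ⟩ := hJgood
    obtain ⟨t, htne, htirr, htK⟩ := hKgood
    classical
    refine ⟨s ∪ t, hsne.mono Finset.subset_union_left, ?_, ?_⟩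
    · intro L hL
      rcases Finset.mem_union.mp hL with hL | hL
      · exact hsirr L hL
      · exact htirr L hL
    · rw [Finset.inf_union, ← hsJ, ← htK, hJK]
end

section
/- A k-ideal P of a commutative semiring R is k-prime if and only if P is both k-semiprime and k-strongly irreducible. -/
variable {R : Type*} [CommSemiring R]

/-- A *k-semiprime* ideal: a proper k-ideal `Q` such that for every k-ideal `I`,
`I * I ≤ Q` implies `I ≤ Q`. -/
def IsKSemiprime (Q : Ideal R) : Prop :=
  IsKIdeal Q ∧ Q ≠ ⊤ ∧ ∀ I : Ideal R, IsKIdeal I → I * I ≤ Q → I ≤ Q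

/-- A *k-strongly irreducible* ideal: a k-ideal `I` such that for all k-ideals `J`, `K`,
`J ⊓ K ≤ I` implies `J ≤ I` or `K ≤ I`. -/
def IsKStronglyIrreducible (I : Ideal R) : Prop :=
  IsKIdeal I ∧ ∀ J K : Ideal R, IsKIdeal J → IsKIdeal K → J ⊓ K ≤ I → J ≤ I ∨ K ≤ I

/-- A k-ideal `P` is k-prime if and only if it is k-semiprime and
k-strongly irreducible. -/
theorem isKPrime_iff_kSemiprime_and_kStronglyIrreducible (P : Ideal R)
    (hP : IsKIdeal P) :
    IsKPrime P ↔ IsKSemiprime P ∧ IsKStronglyIrreducible P := by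
  constructor
  · rintro ⟨hk, hne, hpr⟩
    exact ⟨⟨hk, hne, fun I hI h => (hpr I I hI hI h).elim id id⟩,
      ⟨hk, fun J K hJ hK hle => hpr J K hJ hK (le_trans Ideal.mul_le_inf hle)⟩⟩
  · rintro ⟨⟨hk, hne, hsp⟩, ⟨_, hsi⟩⟩
    refine ⟨hk, hne, fun I J hI hJ hle => ?_⟩
    have hIJk : IsKIdeal (I ⊓ J) := fun a b ha hab =>
      ⟨hI a b ha.1 hab.1, hJ a b ha.2 hab.2⟩
    have h2 : (I ⊓ J) * (I ⊓ J) ≤ P :=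
      le_trans (Ideal.mul_mono inf_le_left inf_le_right) hle
    exact hsi I J hI hJ (le_trans le_rfl (hsp _ hIJk h2))
end
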